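/- Let k and t be natural numbers. Then |β(k + 2^t) − β(k)| ≤ 1, i.e., β(k + 2^t) ≤ β(k) + 1 and β(k) ≤ β(k + 2^t) + 1, where β(k) denotes the number of maximal blocks of consecutive 1's in the binary representation of k. -/

import Mathlib

noncomputable def oneBlocks (k : ℕ) : ℕ :=
  {i : ℕ | k.testBit i = true ∧ k.testBit (i + 1) = false}.ncard

private def bS (n : ℕ) : Set ℕ := {i : ℕ | n.testBit i = true ∧ n.testBit (i + 1) = false}

private lemma oneBlocks_eq (n : ℕ) : oneBlocks n = (bS n).ncard := rfl

private lemma bS_finite (n : ℕ) : (bS n).Finite := by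
  apply Set.Finite.subset (Set.finite_Iio (n+1))
  intro i hi
  obtain ⟨h1, _⟩ := hi
  simp only [Set.mem_Iio]
  by_contra h
  have : n < 2 ^ i := lt_of_lt_of_le (by omega) (Nat.lt_two_pow_self (n := i)).le
  rw [Nat.testBit_lt_two_pow this] at h1
  exact absurd h1 (by simp)

private lemma bS_two_mul (n : ℕ) : bS (2 * n) = (· + 1) '' bS n := by
  ext i
  cases i with
  | zero =>
    simp [bS, Nat.testBit_zero, Nat.mul_mod_right]
  | succ j =>
    simp only [bS, Set.mem_setOf_eq, Set.mem_image]
    rw [show j + 1 = Nat.succ j from rfl, Nat.testBit_succ, Nat.testBit_succ,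
      Nat.mul_div_cancel_left _ (by norm_num : 0 < 2)]
    constructor
    · rintro ⟨h1, h2⟩; exact ⟨j, ⟨h1, h2⟩, rfl⟩
    · rintro ⟨x, hx, hxe⟩
      obtain rfl : x = j := by omega
      exact hx

private lemma bS_two_mul_add_one_odd (n : ℕ) (hn : n % 2 = 1) :
    bS (2 * n + 1) = (· + 1) '' bS n := by
  ext i
  cases i with
  | zero =>
    simp only [bS, Set.mem_setOf_eq, Set.mem_image]
    rw [Nat.testBit_zero, show (0:ℕ) + 1 = Nat.succ 0 from rfl, Nat.testBit_succ,
      Nat.testBit_zero]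
    have h2 : (2 * n + 1) / 2 = n := by omega
    rw [h2, hn]
    simp
  | succ j =>
    simp only [bS, Set.mem_setOf_eq, Set.mem_image]
    have h2 : (2 * n + 1) / 2 = n := by omega
    rw [show j + 1 = Nat.succ j from rfl, Nat.testBit_succ, Nat.testBit_succ, h2]
    constructor
    · rintro ⟨h1, h2⟩; exact ⟨j, ⟨h1, h2⟩, rfl⟩
    · rintro ⟨x, hx, hxe⟩
      obtain rfl : x = j := by omega
      exact hx

private lemma bS_two_mul_add_one_even (n : ℕ) (hn : n % 2 = 0) :
    bS (2 * n + 1) = insert 0 ((· + 1) '' bS n) := by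
  ext i
  cases i with
  | zero =>
    simp only [bS, Set.mem_setOf_eq, Set.mem_insert_iff, Set.mem_image]
    rw [Nat.testBit_zero, show (0:ℕ) + 1 = Nat.succ 0 from rfl, Nat.testBit_succ,
      Nat.testBit_zero]
    have h2 : (2 * n + 1) / 2 = n := by omega
    rw [h2, hn]
    simp
  | succ j =>
    simp only [bS, Set.mem_setOf_eq, Set.mem_insert_iff, Set.mem_image]
    have h2 : (2 * n + 1) / 2 = n := by omega
    rw [show j + 1 = Nat.succ j from rfl, Nat.testBit_succ, Nat.testBit_succ, h2]
    constructor
    · rintro ⟨h1, h2⟩; exact Or.inr ⟨j, ⟨h1, h2⟩, rfl⟩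
    · rintro (h | ⟨x, hx, hxe⟩)
      · omega
      · obtain rfl : x = j := by omega
        exact hx

private lemma succ_inj' : Function.Injective (fun i : ℕ => i + 1) := fun a b h => by
  simpa using h

private lemma oneBlocks_two_mul (n : ℕ) : oneBlocks (2 * n) = oneBlocks n := by
  rw [oneBlocks_eq, oneBlocks_eq, bS_two_mul, Set.ncard_image_of_injective _ succ_inj']

private lemma oneBlocks_two_mul_add_one_odd (n : ℕ) (hn : n % 2 = 1) :
    oneBlocks (2 * n + 1) = oneBlocks n := by
  rw [oneBlocks_eq, oneBlocks_eq, bS_two_mul_add_one_odd n hn,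
    Set.ncard_image_of_injective _ succ_inj']

private lemma oneBlocks_two_mul_add_one_even (n : ℕ) (hn : n % 2 = 0) :
    oneBlocks (2 * n + 1) = oneBlocks n + 1 := by
  rw [oneBlocks_eq, oneBlocks_eq, bS_two_mul_add_one_even n hn,
    Set.ncard_insert_of_notMem (by simp) ((bS_finite n).image _),
    Set.ncard_image_of_injective _ succ_inj']

private lemma oneBlocks_zero : oneBlocks 0 = 0 := by
  rw [oneBlocks_eq]
  have : bS 0 = ∅ := by
    ext i; simp [bS, Nat.zero_testBit]
  simp [this]

private lemma adjacent (k : ℕ) :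
    (k % 2 = 0 → oneBlocks k ≤ oneBlocks (k+1) ∧ oneBlocks (k+1) ≤ oneBlocks k + 1) ∧
    (k % 2 = 1 → oneBlocks (k+1) ≤ oneBlocks k ∧ oneBlocks k ≤ oneBlocks (k+1) + 1) := by
  induction k using Nat.strong_induction_on with
  | _ k IH =>
    rcases Nat.even_or_odd k with ⟨q, hq⟩ | ⟨q, hq⟩
    · -- k = 2q, even
      subst hq
      have hk : q + q = 2 * q := by ring
      rw [hk]
      refine ⟨fun _ => ?_, fun h => by omega⟩
      rcases Nat.even_or_odd q with hqe | hqo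
      · have hq0 : q % 2 = 0 := Nat.even_iff.mp hqe
        rw [oneBlocks_two_mul, oneBlocks_two_mul_add_one_even q hq0]
        omega
      · have hq1 : q % 2 = 1 := Nat.odd_iff.mp hqo
        rw [oneBlocks_two_mul, oneBlocks_two_mul_add_one_odd q hq1]
        omega
    · -- k = 2q+1, odd
      subst hq
      have hk : 2 * q + 1 + 1 = 2 * (q + 1) := by ring
      refine ⟨fun h => by omega, fun _ => ?_⟩
      rw [hk, oneBlocks_two_mul]
      have hqlt : q < 2 * q + 1 := by omega
      rcases Nat.even_or_odd q with hqe | hqo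
      · have hq0 : q % 2 = 0 := Nat.even_iff.mp hqe
        rw [oneBlocks_two_mul_add_one_even q hq0]
        have := (IH q hqlt).1 hq0
        omega
      · have hq1 : q % 2 = 1 := Nat.odd_iff.mp hqo
        rw [oneBlocks_two_mul_add_one_odd q hq1]
        have := (IH q hqlt).2 hq1
        omega

private lemma main_aux : ∀ t k : ℕ,
    oneBlocks (k + 2 ^ t) ≤ oneBlocks k + 1 ∧ oneBlocks k ≤ oneBlocks (k + 2 ^ t) + 1 := by
  intro t
  induction t with
  | zero =>
    intro k
    simp only [pow_zero]
    rcases Nat.even_or_odd k with hke | hko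
    · have := (adjacent k).1 (Nat.even_iff.mp hke)
      omega
    · have := (adjacent k).2 (Nat.odd_iff.mp hko)
      omega
  | succ s IHs =>
    intro k
    rcases Nat.even_or_odd k with ⟨q, hq⟩ | ⟨q, hq⟩
    · -- k = 2q
      have h1 : k = 2 * q := by omega
      rw [h1, show 2 * q + 2 ^ (s+1) = 2 * (q + 2 ^ s) from by ring,
        oneBlocks_two_mul, oneBlocks_two_mul]
      exact IHs q
    · -- k = 2q+1
      have h1 : k = 2 * q + 1 := by omega
      rw [h1, show 2 * q + 1 + 2 ^ (s+1) = 2 * (q + 2 ^ s) + 1 from by ring]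
      rcases Nat.eq_zero_or_pos s with rfl | hs
      · -- t = 1 case: parity flips
        simp only [pow_zero]
        rcases Nat.even_or_odd q with hqe | hqo
        · have hq0 : q % 2 = 0 := Nat.even_iff.mp hqe
          have hq1' : (q + 1) % 2 = 1 := by omega
          rw [oneBlocks_two_mul_add_one_even q hq0, oneBlocks_two_mul_add_one_odd _ hq1']
          have := (adjacent q).1 hq0
          omega
        · have hq1 : q % 2 = 1 := Nat.odd_iff.mp hqo
          have hq0' : (q + 1) % 2 = 0 := by omega
          rw [oneBlocks_two_mul_add_one_odd q hq1, oneBlocks_two_mul_add_one_even _ hq0']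
          have := (adjacent q).2 hq1
          omega
      · -- s ≥ 1: parity preserved
        have hpar : (q + 2 ^ s) % 2 = q % 2 := by
          have : 2 ^ s % 2 = 0 := by
            have : (2:ℕ) ∣ 2 ^ s := dvd_pow_self 2 (by omega)
            omega
          omega
        rcases Nat.even_or_odd q with hqe | hqo
        · have hq0 : q % 2 = 0 := Nat.even_iff.mp hqe
          rw [oneBlocks_two_mul_add_one_even q hq0,
            oneBlocks_two_mul_add_one_even _ (by omega)]
          have := IHs q
          omega
        · have hq1 : q % 2 = 1 := Nat.odd_iff.mp hqo
          rw [oneBlocks_two_mul_add_one_odd q hq1,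
            oneBlocks_two_mul_add_one_odd _ (by omega)]
          have := IHs q
          omega

theorem oneBlocks_add_two_pow
    (k t : ℕ) :
    oneBlocks (k + 2 ^ t) ≤ oneBlocks k + 1 ∧ oneBlocks k ≤ oneBlocks (k + 2 ^ t) + 1 :=
  main_aux t k
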